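/- Let k be an integral domain of characteristic zero, n = n1 + n2, let f1 ∈ k[s_1,…,s_{n1}]^{S_{n1}} and f2 ∈ k[s_{n1+1},…,s_n]^{S_{n2}}. Then the partial symmetrization Σ_σ σ · ( f1 · f2 / Π_{i ≤ n1 < j} (s_i − s_j) ), where σ runs over (n1, n2)-shuffles, computed in the fraction field, is a symmetric polynomial in s_1, …, s_n (in particular it has no poles). -/

import Mathlib

open Equiv MvPolynomial

open scoped Classical

variable {k : Type*} [CommRing k] [IsDomain k]

/-- An `(n1, n2)`-shuffle. -/
def IsShuffle (n1 n2 : ℕ) (σ : Equiv.Perm (Fin (n1 + n2))) : Prop :=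
  StrictMono (fun i : Fin n1 => σ (Fin.castAdd n2 i)) ∧
  StrictMono (fun j : Fin n2 => σ (Fin.natAdd n1 j))

/-- The field homomorphism between fraction fields of polynomial rings induced by an
injective renaming of variables. -/
noncomputable def fracMap {σ τ : Type*} (e : σ → τ) (he : Function.Injective e) :
    FractionRing (MvPolynomial σ k) →+* FractionRing (MvPolynomial τ k) :=
  IsFractionRing.lift
    (g := (algebraMap (MvPolynomial τ k) (FractionRing (MvPolynomial τ k))).comp
      (rename e : MvPolynomial σ k →ₐ[k] MvPolynomial τ k).toRingHom)
    (by
      exact (IsFractionRing.injective (MvPolynomial τ k)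
        (FractionRing (MvPolynomial τ k))).comp (rename_injective e he))

set_option linter.unusedSectionVars false
set_option maxHeartbeats 1000000
set_option synthInstance.maxHeartbeats 400000

section FracMapLemmas

lemma fracMap_algebraMap {σ τ : Type*} (e : σ → τ) (he : Function.Injective e)
    (f : MvPolynomial σ k) :
    fracMap (k := k) e he (algebraMap (MvPolynomial σ k) (FractionRing (MvPolynomial σ k)) f) =
      algebraMap (MvPolynomial τ k) (FractionRing (MvPolynomial τ k)) (rename e f) := by
  unfold fracMap
  rw [IsFractionRing.lift_algebraMap]
  rfl

lemma fracMap_fracMap {σ τ υ : Type*} (e : σ → τ) (he : Function.Injective e)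
    (e' : τ → υ) (he' : Function.Injective e') (x : FractionRing (MvPolynomial σ k)) :
    fracMap (k := k) e' he' (fracMap (k := k) e he x) =
      fracMap (k := k) (e' ∘ e) (he'.comp he) x := by
  have h : (fracMap (k := k) e' he').comp (fracMap (k := k) e he)
      = fracMap (k := k) (e' ∘ e) (he'.comp he) := by
    apply IsLocalization.ringHom_ext (nonZeroDivisors (MvPolynomial σ k))
    refine RingHom.ext fun f => ?_
    simp only [RingHom.comp_apply, fracMap_algebraMap]
    rw [rename_rename]
  exact DFunLike.congr_fun h x

lemma fracMap_congr {σ τ : Type*} {e1 e2 : σ → τ} (he1 : Function.Injective e1)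
    (he2 : Function.Injective e2) (h : e1 = e2) (x : FractionRing (MvPolynomial σ k)) :
    fracMap (k := k) e1 he1 x = fracMap (k := k) e2 he2 x := by
  subst h; rfl

end FracMapLemmas

section Subst
variable {n : ℕ}

/-- substitute `X b := X a`. -/
noncomputable def subst (a b : Fin n) :
    MvPolynomial (Fin n) k →ₐ[k] MvPolynomial (Fin n) k :=
  aeval (fun x => if x = b then X a else X x)

lemma subst_X (a b x : Fin n) :
    subst (k := k) a b (X x) = if x = b then X a else X x := by
  simp [subst]

lemma dvd_sub_subst (a b : Fin n) (f : MvPolynomial (Fin n) k) :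
    (X a - X b : MvPolynomial (Fin n) k) ∣ f - subst a b f := by
  induction f using MvPolynomial.induction_on with
  | C c => simp [subst]
  | add f g hf hg =>
      have := dvd_add hf hg
      rw [map_add]
      convert this using 1
      ring
  | mul_X f i hf =>
      have h2 : (X a - X b : MvPolynomial (Fin n) k) ∣
          subst a b f * (X i - subst a b (X i)) := by
        rcases eq_or_ne i b with rfl | hib
        · rw [subst_X, if_pos rfl]
          have hd : (X a - X i : MvPolynomial (Fin n) k) ∣ (X i - X a) := ⟨-1, by ring⟩
          exact hd.mul_left _
        · rw [subst_X, if_neg hib, sub_self, mul_zero]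
          exact dvd_zero _
      have := dvd_add (hf.mul_right (X i)) h2
      rw [map_mul]
      convert this using 1
      ring

lemma dvd_of_subst_eq_zero {a b : Fin n} {f : MvPolynomial (Fin n) k}
    (h : subst a b f = 0) : (X a - X b : MvPolynomial (Fin n) k) ∣ f := by
  have := dvd_sub_subst (k := k) a b f
  rwa [h, sub_zero] at this

lemma subst_eq_zero_of_dvd {a b : Fin n} {f : MvPolynomial (Fin n) k}
    (h : (X a - X b : MvPolynomial (Fin n) k) ∣ f) : subst a b f = 0 := by
  obtain ⟨g, rfl⟩ := h
  rw [map_mul, map_sub, subst_X, subst_X, if_pos rfl, ite_self, sub_self, zero_mul]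

lemma X_sub_X_ne_zero {u v : Fin n} (h : u ≠ v) :
    (X u - X v : MvPolynomial (Fin n) k) ≠ 0 :=
  sub_ne_zero.mpr (fun hc => h (MvPolynomial.X_injective hc))

lemma prime_X_sub_X {a b : Fin n} (hab : a ≠ b) :
    Prime (X a - X b : MvPolynomial (Fin n) k) := by
  refine ⟨X_sub_X_ne_zero hab, ?_, ?_⟩
  · intro hu
    have h0 : subst (k := k) a b (X a - X b) = 0 :=
      subst_eq_zero_of_dvd dvd_rfl
    have := hu.map (subst (k := k) a b)
    rw [h0] at this
    exact not_isUnit_zero this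
  · intro x y h
    have h0 : subst (k := k) a b x * subst a b y = 0 := by
      rw [← map_mul]; exact subst_eq_zero_of_dvd h
    rcases mul_eq_zero.mp h0 with h' | h'
    · exact Or.inl (dvd_of_subst_eq_zero h')
    · exact Or.inr (dvd_of_subst_eq_zero h')

lemma not_X_sub_X_dvd {i j i' j' : Fin n} (hij : i < j) (hij' : i' < j')
    (hne : (i, j) ≠ (i', j')) :
    ¬ (X j - X i : MvPolynomial (Fin n) k) ∣ (X j' - X i') := by
  intro hdvd
  have h0 : subst (k := k) j i (X j' - X i') = 0 := subst_eq_zero_of_dvd hdvd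
  rw [map_sub, subst_X, subst_X] at h0
  -- analyze
  rcases eq_or_ne j' i with hj'i | hj'i <;> rcases eq_or_ne i' i with hi'i | hi'i
  · exact absurd (hi'i.trans hj'i.symm) (ne_of_lt hij')
  · rw [if_pos hj'i, if_neg hi'i] at h0
    have h1 : j = i' := MvPolynomial.X_injective (sub_eq_zero.mp h0)
    exact absurd (((hij'.trans_eq hj'i).trans hij).trans_eq h1) (lt_irrefl i')
  · rw [if_neg hj'i, if_pos hi'i] at h0
    have h1 : j' = j := MvPolynomial.X_injective (sub_eq_zero.mp h0)
    exact hne (by rw [hi'i, h1])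
  · rw [if_neg hj'i, if_neg hi'i] at h0
    exact absurd (MvPolynomial.X_injective (sub_eq_zero.mp h0)) (ne_of_gt hij')

end Subst

lemma prod_dvd_of_primes {α : Type*} [CommMonoidWithZero α] {ι : Type*} [DecidableEq ι]
    (s : Finset ι) (p : ι → α) :
    ∀ (_ : ∀ i ∈ s, Prime (p i)) (_ : ∀ i ∈ s, ∀ j ∈ s, p i ∣ p j → i = j)
      (x : α) (_ : ∀ i ∈ s, p i ∣ x), (∏ i ∈ s, p i) ∣ x := by
  induction s using Finset.induction_on with
  | empty => intro _ _ x _; simp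
  | @insert a s ha ih =>
    intro hp hna x hd
    obtain ⟨y, rfl⟩ := hd a (Finset.mem_insert_self a s)
    have hy : ∀ i ∈ s, p i ∣ y := by
      intro i hi
      have hpi := hp i (Finset.mem_insert_of_mem hi)
      rcases hpi.2.2 _ _ (hd i (Finset.mem_insert_of_mem hi)) with h' | h'
      · exact absurd (hna i (Finset.mem_insert_of_mem hi) a (Finset.mem_insert_self a s) h')
          (fun hc => ha (hc ▸ hi))
      · exact h'
    rw [Finset.prod_insert ha]
    exact mul_dvd_mul_left _
      (ih (fun i hi => hp i (Finset.mem_insert_of_mem hi))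
        (fun i hi j hj => hna i (Finset.mem_insert_of_mem hi) j (Finset.mem_insert_of_mem hj))
        y hy)



/-- The Vandermonde polynomial. -/
noncomputable def vand (k : Type*) [CommRing k] (n : ℕ) : MvPolynomial (Fin n) k :=
  ∏ i : Fin n, ∏ j ∈ Finset.Ioi i, (X j - X i)

lemma vand_ne_zero {n : ℕ} : vand k n ≠ 0 := by
  rw [vand]
  rw [Finset.prod_ne_zero_iff]
  intro i _
  rw [Finset.prod_ne_zero_iff]
  intro j hj
  exact sub_ne_zero.mpr fun hc =>
    (ne_of_gt (Finset.mem_Ioi.mp hj)) (MvPolynomial.X_injective hc)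

lemma rename_vand {n : ℕ} (w : Equiv.Perm (Fin n)) :
    rename (⇑w) (vand k n) = (Equiv.Perm.sign w : ℤ) • vand k n := by
  have h1 : rename (⇑w) (vand k n) =
      Matrix.det (Matrix.vandermonde (fun i => (X (w i) : MvPolynomial (Fin n) k))) := by
    rw [vand, map_prod, Matrix.det_vandermonde]
    refine Finset.prod_congr rfl fun i _ => ?_
    rw [map_prod]
    refine Finset.prod_congr rfl fun j _ => ?_
    rw [map_sub, rename_X, rename_X]
  have h2 : Matrix.vandermonde (fun i => (X (w i) : MvPolynomial (Fin n) k)) =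
      (Matrix.vandermonde (fun i => (X i : MvPolynomial (Fin n) k))).submatrix (⇑w) id := by
    ext i j; rfl
  rw [h1, h2, Matrix.det_permute, Matrix.det_vandermonde, ← vand]
  rcases Int.units_eq_one_or (Equiv.Perm.sign w) with h | h <;> rw [h] <;> simp

lemma vand_eq_prod_pairs {n : ℕ} :
    vand k n = ∏ p ∈ (Finset.univ ×ˢ Finset.univ).filter
        (fun p : Fin n × Fin n => p.1 < p.2), (X p.2 - X p.1) := by
  rw [Finset.prod_filter, Finset.prod_product, vand]
  refine Finset.prod_congr rfl fun i _ => ?_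
  rw [Finset.prod_ite, Finset.prod_const_one, mul_one]
  refine Finset.prod_congr ?_ (fun _ _ => rfl)
  ext j
  simp [Finset.mem_Ioi]

lemma prod_X_sub_X_dvd_vand {n : ℕ} {ι : Type*} [DecidableEq ι] (s : Finset ι)
    (u v : ι → Fin n) (huv : ∀ t ∈ s, u t ≠ v t)
    (hinj : ∀ t ∈ s, ∀ t' ∈ s,
      ((u t = u t' ∧ v t = v t') ∨ (u t = v t' ∧ v t = u t')) → t = t') :
    (∏ t ∈ s, (X (u t) - X (v t)) : MvPolynomial (Fin n) k) ∣ vand k n := by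
  set m : ι → Fin n × Fin n := fun t => if v t < u t then (v t, u t) else (u t, v t) with hm
  set ε : ι → MvPolynomial (Fin n) k := fun t => if v t < u t then 1 else -1 with hε
  have hterm : ∀ t ∈ s, (X (u t) - X (v t) : MvPolynomial (Fin n) k)
      = ε t * (X (m t).2 - X (m t).1) := by
    intro t _
    by_cases h : v t < u t
    · simp only [hm, hε, if_pos h]; ring
    · simp only [hm, hε, if_neg h]; ring
  have hsplit : (∏ t ∈ s, (X (u t) - X (v t)) : MvPolynomial (Fin n) k)
      = (∏ t ∈ s, (X (m t).2 - X (m t).1)) * ∏ t ∈ s, ε t := by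
    rw [← Finset.prod_mul_distrib]
    refine Finset.prod_congr rfl fun t ht => ?_
    rw [hterm t ht]; ring
  have hminj : ∀ t ∈ s, ∀ t' ∈ s, m t = m t' → t = t' := by
    intro t ht t' ht' hmm
    simp only [hm] at hmm
    by_cases h : v t < u t <;> by_cases h' : v t' < u t'
    · rw [if_pos h, if_pos h', Prod.mk.injEq] at hmm
      exact hinj t ht t' ht' (Or.inl ⟨hmm.2, hmm.1⟩)
    · rw [if_pos h, if_neg h', Prod.mk.injEq] at hmm
      exact hinj t ht t' ht' (Or.inr ⟨hmm.2, hmm.1⟩)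
    · rw [if_neg h, if_pos h', Prod.mk.injEq] at hmm
      exact hinj t ht t' ht' (Or.inr ⟨hmm.1, hmm.2⟩)
    · rw [if_neg h, if_neg h', Prod.mk.injEq] at hmm
      exact hinj t ht t' ht' (Or.inl ⟨hmm.1, hmm.2⟩)
  have himg : (∏ t ∈ s, (X (m t).2 - X (m t).1) : MvPolynomial (Fin n) k)
      = ∏ p ∈ s.image m, (X p.2 - X p.1) :=
    (Finset.prod_image (f := fun p : Fin n × Fin n =>
      (X p.2 - X p.1 : MvPolynomial (Fin n) k)) hminj).symm
  have hsub : s.image m ⊆ (Finset.univ ×ˢ Finset.univ).filter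
      (fun p : Fin n × Fin n => p.1 < p.2) := by
    intro p hp
    obtain ⟨t, ht, rfl⟩ := Finset.mem_image.mp hp
    simp only [Finset.mem_filter, Finset.mem_product, Finset.mem_univ, true_and]
    by_cases h : v t < u t
    · simp only [hm, if_pos h]; exact h
    · simp only [hm, if_neg h]
      exact lt_of_le_of_ne (not_lt.mp h) (huv t ht)
  have hdvd : (∏ t ∈ s, (X (m t).2 - X (m t).1) : MvPolynomial (Fin n) k) ∣ vand k n := by
    rw [himg, vand_eq_prod_pairs]
    exact Finset.prod_dvd_prod_of_subset _ _ _ hsub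
  have hunit : IsUnit (∏ t ∈ s, ε t) := by
    refine IsUnit.of_mul_eq_one (∏ t ∈ s, ε t) ?_
    rw [← Finset.prod_mul_distrib]
    refine Finset.prod_eq_one fun t _ => ?_
    by_cases h : v t < u t <;> simp [hε, h]
  rw [hsplit, ← hunit.unit_spec, Units.mul_right_dvd]
  exact hdvd

section Young
variable (n1 n2 : ℕ)

/-- The Young subgroup element associated to a pair of permutations. -/
def young (p : Equiv.Perm (Fin n1) × Equiv.Perm (Fin n2)) : Equiv.Perm (Fin (n1 + n2)) :=
  finSumFinEquiv.permCongr (Equiv.sumCongr p.1 p.2)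

variable {n1 n2}

lemma young_castAdd (p) (i : Fin n1) :
    young n1 n2 p (Fin.castAdd n2 i) = Fin.castAdd n2 (p.1 i) := by
  simp [young, Equiv.permCongr_apply]

lemma young_natAdd (p) (j : Fin n2) :
    young n1 n2 p (Fin.natAdd n1 j) = Fin.natAdd n1 (p.2 j) := by
  simp [young, Equiv.permCongr_apply]

lemma young_mul (p q) :
    young n1 n2 p * young n1 n2 q = young n1 n2 (p * q) := by
  apply Equiv.ext
  intro x
  induction x using Fin.addCases with
  | left i =>
      rw [Equiv.Perm.mul_apply, young_castAdd, young_castAdd, young_castAdd]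
      rfl
  | right j =>
      rw [Equiv.Perm.mul_apply, young_natAdd, young_natAdd, young_natAdd]
      rfl

/-- The shuffle associated to an arbitrary permutation. -/
noncomputable def shufOf (w : Equiv.Perm (Fin (n1 + n2))) : Equiv.Perm (Fin (n1 + n2)) :=
  w * young n1 n2 (Tuple.sort (fun i => w (Fin.castAdd n2 i)),
     Tuple.sort (fun j => w (Fin.natAdd n1 j)))

lemma shufOf_spec (w : Equiv.Perm (Fin (n1 + n2))) :
    ∃ p, shufOf w = w * young n1 n2 p := ⟨_, rfl⟩

lemma castAdd_injective : Function.Injective (Fin.castAdd n2 : Fin n1 → Fin (n1 + n2)) :=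
  fun i j h => Fin.ext (by simpa using congrArg Fin.val h)

lemma natAdd_injective : Function.Injective (Fin.natAdd n1 : Fin n2 → Fin (n1 + n2)) :=
  fun i j h => Fin.ext (by have := congrArg Fin.val h; simp at this; omega)

lemma isShuffle_shufOf (w : Equiv.Perm (Fin (n1 + n2))) : IsShuffle n1 n2 (shufOf w) := by
  constructor
  · have he : (fun i : Fin n1 => shufOf w (Fin.castAdd n2 i)) =
        (fun i => w (Fin.castAdd n2 i)) ∘ ⇑(Tuple.sort (fun i => w (Fin.castAdd n2 i))) := by
      funext i
      simp only [shufOf, Equiv.Perm.mul_apply, young_castAdd, Function.comp_apply]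
    rw [he]
    refine (Tuple.monotone_sort _).strictMono_of_injective ?_
    exact (w.injective.comp (castAdd_injective)).comp (Equiv.injective _)
  · have he : (fun j : Fin n2 => shufOf w (Fin.natAdd n1 j)) =
        (fun j => w (Fin.natAdd n1 j)) ∘ ⇑(Tuple.sort (fun j => w (Fin.natAdd n1 j))) := by
      funext j
      simp only [shufOf, Equiv.Perm.mul_apply, young_natAdd, Function.comp_apply]
    rw [he]
    refine (Tuple.monotone_sort _).strictMono_of_injective ?_
    exact (w.injective.comp (natAdd_injective)).comp (Equiv.injective _)

lemma shuffle_unique {σ σ' : Equiv.Perm (Fin (n1 + n2))} (hσ : IsShuffle n1 n2 σ)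
    (hσ' : IsShuffle n1 n2 σ') (p) (h : σ' = σ * young n1 n2 p) : σ' = σ := by
  have h1 : (fun i : Fin n1 => σ' (Fin.castAdd n2 i)) =
      (fun i : Fin n1 => σ (Fin.castAdd n2 i)) ∘ ⇑p.1 := by
    funext i
    rw [h, Equiv.Perm.mul_apply, young_castAdd, Function.comp_apply]
  have h2 : (fun j : Fin n2 => σ' (Fin.natAdd n1 j)) =
      (fun j : Fin n2 => σ (Fin.natAdd n1 j)) ∘ ⇑p.2 := by
    funext j
    rw [h, Equiv.Perm.mul_apply, young_natAdd, Function.comp_apply]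
  have e1 : (fun i : Fin n1 => σ' (Fin.castAdd n2 i)) =
      (fun i : Fin n1 => σ (Fin.castAdd n2 i)) := by
    have : WellFoundedLT (Fin n1) := inferInstance
    refine (hσ'.1.range_inj hσ.1).mp ?_
    rw [h1]
    exact p.1.surjective.range_comp _
  have e2 : (fun j : Fin n2 => σ' (Fin.natAdd n1 j)) =
      (fun j : Fin n2 => σ (Fin.natAdd n1 j)) := by
    have : WellFoundedLT (Fin n2) := inferInstance
    refine (hσ'.2.range_inj hσ.2).mp ?_
    rw [h2]
    exact p.2.surjective.range_comp _
  apply Equiv.ext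
  intro x
  induction x using Fin.addCases with
  | left i => exact congrFun e1 i
  | right j => exact congrFun e2 j

lemma shufOf_shuffle_mul_young {σ : Equiv.Perm (Fin (n1 + n2))} (hσ : IsShuffle n1 n2 σ)
    (p) : shufOf (σ * young n1 n2 p) = σ := by
  obtain ⟨q, hq⟩ := shufOf_spec (σ * young n1 n2 p)
  rw [mul_assoc, young_mul] at hq
  exact shuffle_unique hσ (isShuffle_shufOf _) _ hq

end Young

lemma castAdd_ne_natAdd {n1 n2 : ℕ} (i : Fin n1) (j : Fin n2) :
    Fin.castAdd n2 i ≠ Fin.natAdd n1 j := by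
  intro h
  have := congrArg Fin.val h
  simp at this
  omega

lemma subst_rename_swap {n : ℕ} (a b : Fin n) (hab : a ≠ b) (f : MvPolynomial (Fin n) k) :
    subst (k := k) a b (rename (⇑(Equiv.swap a b)) f) = subst a b f := by
  rw [subst, aeval_rename]
  have hfun : ((fun x => if x = b then X a else X x) ∘ ⇑(Equiv.swap a b)) =
      (fun x : Fin n => if x = b then (X a : MvPolynomial (Fin n) k) else X x) := by
    funext x
    rcases eq_or_ne x a with rfl | hxa
    · simp [Equiv.swap_apply_left, hab, Ne.symm hab]
    · rcases eq_or_ne x b with rfl | hxb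
      · simp [Equiv.swap_apply_right, hab]
      · simp [Equiv.swap_apply_of_ne_of_ne hxa hxb]
  rw [hfun]


section MainAux

variable {n1 n2 : ℕ}

lemma sum_invariant (A : FractionRing (MvPolynomial (Fin (n1 + n2)) k))
    (hA : ∀ p, fracMap (k := k) (⇑(young n1 n2 p)) (young n1 n2 p).injective A = A)
    (w : Equiv.Perm (Fin (n1 + n2))) :
    fracMap (k := k) (⇑w) w.injective
        (∑ σ : Equiv.Perm (Fin (n1 + n2)),
          if IsShuffle n1 n2 σ then fracMap (k := k) (⇑σ) σ.injective A else 0) =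
      ∑ σ : Equiv.Perm (Fin (n1 + n2)),
        if IsShuffle n1 n2 σ then fracMap (k := k) (⇑σ) σ.injective A else 0 := by
  classical
  have h1 : fracMap (k := k) (⇑w) w.injective
      (∑ σ : Equiv.Perm (Fin (n1 + n2)),
        if IsShuffle n1 n2 σ then fracMap (k := k) (⇑σ) σ.injective A else 0) =
      ∑ σ ∈ Finset.univ.filter (IsShuffle n1 n2),
        fracMap (k := k) (⇑(w * σ)) (w * σ).injective A := by
    rw [map_sum, Finset.sum_filter]
    refine Finset.sum_congr rfl fun σ _ => ?_
    by_cases h : IsShuffle n1 n2 σ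
    · rw [if_pos h, if_pos h, fracMap_fracMap]
      exact fracMap_congr _ _ (Equiv.Perm.coe_mul w σ).symm _
    · rw [if_neg h, if_neg h, map_zero]
  have h2 : ∑ σ ∈ Finset.univ.filter (IsShuffle n1 n2),
        fracMap (k := k) (⇑(w * σ)) (w * σ).injective A =
      ∑ σ ∈ Finset.univ.filter (IsShuffle n1 n2),
        fracMap (k := k) (⇑σ) σ.injective A := by
    refine Finset.sum_nbij' (fun σ => shufOf (w * σ)) (fun σ => shufOf (w⁻¹ * σ))
      (fun σ _ => Finset.mem_filter.mpr ⟨Finset.mem_univ _, isShuffle_shufOf _⟩)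
      (fun σ _ => Finset.mem_filter.mpr ⟨Finset.mem_univ _, isShuffle_shufOf _⟩)
      ?_ ?_ ?_
    · intro σ hσ
      show shufOf (w⁻¹ * shufOf (w * σ)) = σ
      obtain ⟨p, hp⟩ := shufOf_spec (w * σ)
      rw [hp, ← mul_assoc, inv_mul_cancel_left]
      exact shufOf_shuffle_mul_young (Finset.mem_filter.mp hσ).2 p
    · intro σ hσ
      show shufOf (w * shufOf (w⁻¹ * σ)) = σ
      obtain ⟨p, hp⟩ := shufOf_spec (w⁻¹ * σ)
      rw [hp, ← mul_assoc, mul_inv_cancel_left]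
      exact shufOf_shuffle_mul_young (Finset.mem_filter.mp hσ).2 p
    · intro σ _
      show fracMap (k := k) (⇑(w * σ)) (w * σ).injective A =
        fracMap (k := k) (⇑(shufOf (w * σ))) (shufOf (w * σ)).injective A
      obtain ⟨p, hp⟩ := shufOf_spec (w * σ)
      rw [hp]
      have h3 : fracMap (k := k) (⇑(w * σ * young n1 n2 p))
          (w * σ * young n1 n2 p).injective A = fracMap (k := k) (⇑(w * σ)) (w * σ).injective
            (fracMap (k := k) (⇑(young n1 n2 p)) (young n1 n2 p).injective A) := by
        rw [fracMap_fracMap]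
        exact fracMap_congr _ _ (Equiv.Perm.coe_mul (w * σ) (young n1 n2 p)).symm _
      rw [h3, hA]
  rw [h1, h2, Finset.sum_filter]

lemma youngP_fix (f1 : MvPolynomial (Fin n1) k)
    (hf1 : ∀ τ : Equiv.Perm (Fin n1), rename (⇑τ) f1 = f1)
    (f2 : MvPolynomial (Fin n2) k)
    (hf2 : ∀ τ : Equiv.Perm (Fin n2), rename (⇑τ) f2 = f2)
    (p : Equiv.Perm (Fin n1) × Equiv.Perm (Fin n2)) :
    rename (⇑(young n1 n2 p))
        (rename (Fin.castAdd n2) f1 * rename (Fin.natAdd n1) f2) =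
      rename (Fin.castAdd n2) f1 * rename (Fin.natAdd n1) f2 := by
  rw [map_mul, rename_rename, rename_rename]
  have e1 : ⇑(young n1 n2 p) ∘ Fin.castAdd n2 = Fin.castAdd n2 ∘ ⇑p.1 := by
    funext i; exact young_castAdd p i
  have e2 : ⇑(young n1 n2 p) ∘ Fin.natAdd n1 = Fin.natAdd n1 ∘ ⇑p.2 := by
    funext j; exact young_natAdd p j
  rw [e1, e2, ← rename_rename, ← rename_rename, hf1 p.1, hf2 p.2]

lemma youngQ_fix (p : Equiv.Perm (Fin n1) × Equiv.Perm (Fin n2)) :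
    rename (⇑(young n1 n2 p))
        (∏ i : Fin n1, ∏ j : Fin n2,
          ((X (Fin.castAdd n2 i) - X (Fin.natAdd n1 j)) : MvPolynomial (Fin (n1 + n2)) k)) =
      ∏ i : Fin n1, ∏ j : Fin n2,
        ((X (Fin.castAdd n2 i) - X (Fin.natAdd n1 j)) : MvPolynomial (Fin (n1 + n2)) k) := by
  have h1 : rename (⇑(young n1 n2 p))
      (∏ i : Fin n1, ∏ j : Fin n2,
        ((X (Fin.castAdd n2 i) - X (Fin.natAdd n1 j)) : MvPolynomial (Fin (n1 + n2)) k)) =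
      ∏ i : Fin n1, ∏ j : Fin n2,
        ((X (Fin.castAdd n2 (p.1 i)) - X (Fin.natAdd n1 (p.2 j))) :
          MvPolynomial (Fin (n1 + n2)) k) := by
    rw [map_prod]
    refine Finset.prod_congr rfl fun i _ => ?_
    rw [map_prod]
    refine Finset.prod_congr rfl fun j _ => ?_
    rw [map_sub, rename_X, rename_X, young_castAdd, young_natAdd]
  rw [h1]
  calc ∏ i : Fin n1, ∏ j : Fin n2,
        ((X (Fin.castAdd n2 (p.1 i)) - X (Fin.natAdd n1 (p.2 j))) :
          MvPolynomial (Fin (n1 + n2)) k)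
      = ∏ i : Fin n1, ∏ j : Fin n2,
        ((X (Fin.castAdd n2 (p.1 i)) - X (Fin.natAdd n1 j)) :
          MvPolynomial (Fin (n1 + n2)) k) :=
        Finset.prod_congr rfl fun i _ => Equiv.prod_comp p.2
          (fun j => (X (Fin.castAdd n2 (p.1 i)) - X (Fin.natAdd n1 j) :
            MvPolynomial (Fin (n1 + n2)) k))
    _ = _ := Equiv.prod_comp p.1 (fun i => ∏ j : Fin n2,
          ((X (Fin.castAdd n2 i) - X (Fin.natAdd n1 j)) :
            MvPolynomial (Fin (n1 + n2)) k))

lemma renameQ_dvd_vand (σ : Equiv.Perm (Fin (n1 + n2))) :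
    rename (⇑σ)
        (∏ i : Fin n1, ∏ j : Fin n2,
          ((X (Fin.castAdd n2 i) - X (Fin.natAdd n1 j)) : MvPolynomial (Fin (n1 + n2)) k)) ∣
      vand k (n1 + n2) := by
  classical
  have h1 : rename (⇑σ)
      (∏ i : Fin n1, ∏ j : Fin n2,
        ((X (Fin.castAdd n2 i) - X (Fin.natAdd n1 j)) : MvPolynomial (Fin (n1 + n2)) k)) =
      ∏ t : Fin n1 × Fin n2,
        ((X (σ (Fin.castAdd n2 t.1)) - X (σ (Fin.natAdd n1 t.2))) :
          MvPolynomial (Fin (n1 + n2)) k) := by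
    have h0 : rename (⇑σ)
        (∏ i : Fin n1, ∏ j : Fin n2,
          ((X (Fin.castAdd n2 i) - X (Fin.natAdd n1 j)) : MvPolynomial (Fin (n1 + n2)) k)) =
        ∏ i : Fin n1, ∏ j : Fin n2,
          ((X (σ (Fin.castAdd n2 i)) - X (σ (Fin.natAdd n1 j))) :
            MvPolynomial (Fin (n1 + n2)) k) := by
      rw [map_prod]
      refine Finset.prod_congr rfl fun i _ => ?_
      rw [map_prod]
      refine Finset.prod_congr rfl fun j _ => ?_
      rw [map_sub, rename_X, rename_X]
    rw [h0]
    exact (Fintype.prod_prod_type' (fun i j =>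
      ((X (σ (Fin.castAdd n2 i)) - X (σ (Fin.natAdd n1 j))) :
        MvPolynomial (Fin (n1 + n2)) k))).symm
  rw [h1]
  have harg1 : ∀ t ∈ (Finset.univ : Finset (Fin n1 × Fin n2)),
      σ (Fin.castAdd n2 t.1) ≠ σ (Fin.natAdd n1 t.2) := by
    intro t _
    exact fun h => castAdd_ne_natAdd t.1 t.2 (σ.injective h)
  have harg2 : ∀ t ∈ (Finset.univ : Finset (Fin n1 × Fin n2)),
      ∀ t' ∈ (Finset.univ : Finset (Fin n1 × Fin n2)),
      ((σ (Fin.castAdd n2 t.1) = σ (Fin.castAdd n2 t'.1) ∧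
        σ (Fin.natAdd n1 t.2) = σ (Fin.natAdd n1 t'.2)) ∨
       (σ (Fin.castAdd n2 t.1) = σ (Fin.natAdd n1 t'.2) ∧
        σ (Fin.natAdd n1 t.2) = σ (Fin.castAdd n2 t'.1))) → t = t' := by
    intro t _ t' _ h
    rcases h with ⟨h1', h2'⟩ | ⟨h1', _⟩
    · have e1 := castAdd_injective (σ.injective h1')
      have e2 := natAdd_injective (σ.injective h2')
      exact Prod.ext e1 e2
    · exact absurd (σ.injective h1') (castAdd_ne_natAdd t.1 t'.2)
  have hfin := prod_X_sub_X_dvd_vand (k := k) Finset.univ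
    (fun t : Fin n1 × Fin n2 => σ (Fin.castAdd n2 t.1)) (fun t => σ (Fin.natAdd n1 t.2))
    harg1 harg2
  exact hfin

end MainAux

set_option maxHeartbeats 1000000 in
/-- for `f1` symmetric in the first `n1` variables and `f2` symmetric in the last
`n2` variables, the partial (shuffle) symmetrization
`Σ_σ σ·( f1·f2 / Π_{i ≤ n1 < j}(s_i − s_j) )` over `(n1,n2)`-shuffles, computed in the
fraction field, is (the image of) a symmetric polynomial in all `n = n1 + n2` variables;
in particular it has no poles. -/
theorem shuffle_pushforward_is_symmetric_polynomial
    [CharZero k] (n1 n2 : ℕ)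
    (f1 : MvPolynomial (Fin n1) k) (hf1 : ∀ τ : Equiv.Perm (Fin n1), rename (⇑τ) f1 = f1)
    (f2 : MvPolynomial (Fin n2) k) (hf2 : ∀ τ : Equiv.Perm (Fin n2), rename (⇑τ) f2 = f2) :
    ∃ g : MvPolynomial (Fin (n1 + n2)) k,
      (∀ w : Equiv.Perm (Fin (n1 + n2)), rename (⇑w) g = g) ∧
      algebraMap (MvPolynomial (Fin (n1 + n2)) k)
          (FractionRing (MvPolynomial (Fin (n1 + n2)) k)) g =
        ∑ σ : Equiv.Perm (Fin (n1 + n2)),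
          if IsShuffle n1 n2 σ then
            fracMap (⇑σ) σ.injective
              (algebraMap (MvPolynomial (Fin (n1 + n2)) k)
                  (FractionRing (MvPolynomial (Fin (n1 + n2)) k))
                  (rename (Fin.castAdd n2) f1 * rename (Fin.natAdd n1) f2) /
                algebraMap (MvPolynomial (Fin (n1 + n2)) k)
                  (FractionRing (MvPolynomial (Fin (n1 + n2)) k))
                  (∏ i : Fin n1, ∏ j : Fin n2,
                    (X (Fin.castAdd n2 i) - X (Fin.natAdd n1 j))))
          else 0 := by
  classical
  set ι : MvPolynomial (Fin (n1 + n2)) k →+*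
      FractionRing (MvPolynomial (Fin (n1 + n2)) k) :=
    algebraMap (MvPolynomial (Fin (n1 + n2)) k)
      (FractionRing (MvPolynomial (Fin (n1 + n2)) k)) with hιdef
  set P : MvPolynomial (Fin (n1 + n2)) k :=
    rename (Fin.castAdd n2) f1 * rename (Fin.natAdd n1) f2 with hPdef
  set Q : MvPolynomial (Fin (n1 + n2)) k :=
    ∏ i : Fin n1, ∏ j : Fin n2, (X (Fin.castAdd n2 i) - X (Fin.natAdd n1 j)) with hQdef
  set S : FractionRing (MvPolynomial (Fin (n1 + n2)) k) :=
    ∑ σ : Equiv.Perm (Fin (n1 + n2)),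
      if IsShuffle n1 n2 σ then fracMap (⇑σ) σ.injective (ι P / ι Q) else 0 with hSdef
  have hιinj : Function.Injective ι :=
    IsFractionRing.injective (MvPolynomial (Fin (n1 + n2)) k)
      (FractionRing (MvPolynomial (Fin (n1 + n2)) k))
  have hQne : Q ≠ 0 := by
    rw [hQdef, Finset.prod_ne_zero_iff]
    intro i _
    rw [Finset.prod_ne_zero_iff]
    intro j _
    exact X_sub_X_ne_zero (castAdd_ne_natAdd i j)
  have hfracYoung : ∀ p, fracMap (⇑(young n1 n2 p)) (young n1 n2 p).injective (ι P / ι Q)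
      = ι P / ι Q := by
    intro p
    rw [map_div₀, hιdef, fracMap_algebraMap, fracMap_algebraMap, hPdef, hQdef,
      youngP_fix f1 hf1 f2 hf2 p, youngQ_fix p]
  -- Step 1 : S is invariant under every permutation
  have hInv : ∀ w : Equiv.Perm (Fin (n1 + n2)), fracMap (⇑w) w.injective S = S := by
    intro w
    rw [hSdef]
    exact sum_invariant (ι P / ι Q) hfracYoung w
  -- Step 2 : clearing denominators
  have hQdvd : ∀ σ : Equiv.Perm (Fin (n1 + n2)),
      rename (⇑σ) Q ∣ vand k (n1 + n2) := by
    intro σ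
    rw [hQdef]
    exact renameQ_dvd_vand σ
  choose c hc using fun σ : Equiv.Perm (Fin (n1 + n2)) => hQdvd σ
  set N : MvPolynomial (Fin (n1 + n2)) k :=
    ∑ σ ∈ Finset.univ.filter (IsShuffle n1 n2), rename (⇑σ) P * c σ with hNdef
  have hVne : (vand k (n1 + n2) : MvPolynomial (Fin (n1 + n2)) k) ≠ 0 := vand_ne_zero
  have hιVne : ι (vand k (n1 + n2)) ≠ 0 := fun h => hVne (hιinj (by rw [h, map_zero]))
  have hN : ι N = S * ι (vand k (n1 + n2)) := by
    rw [hNdef, map_sum, hSdef, ← Finset.sum_filter, Finset.sum_mul]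
    refine Finset.sum_congr rfl fun σ hσ => ?_
    have hb : ι (rename (⇑σ) Q) ≠ 0 := fun h => by
      have h' : rename (⇑σ) Q = 0 := hιinj (by rw [h, map_zero])
      exact hQne ((rename_injective _ σ.injective) (by rw [h', map_zero]))
    have e1 : fracMap (⇑σ) σ.injective (ι P / ι Q) =
        ι (rename (⇑σ) P) / ι (rename (⇑σ) Q) := by
      rw [map_div₀, hιdef, fracMap_algebraMap, fracMap_algebraMap]
    have e2 : ι (vand k (n1 + n2)) = ι (rename (⇑σ) Q) * ι (c σ) := by
      rw [← map_mul, ← hc σ]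
    rw [map_mul, e1, e2, ← mul_assoc, div_mul_cancel₀ _ hb]
  -- Step 3 : N is antisymmetric, hence divisible by the Vandermonde polynomial
  have hNanti : ∀ τ : Equiv.Perm (Fin (n1 + n2)),
      rename (⇑τ) N = (Equiv.Perm.sign τ : ℤ) • N := by
    intro τ
    apply hιinj
    have h1 : ι (rename (⇑τ) N) = fracMap (⇑τ) τ.injective (ι N) := by
      rw [hιdef, fracMap_algebraMap]
    rw [h1, hN, map_mul, hInv τ, hιdef, fracMap_algebraMap, rename_vand, map_zsmul,
      mul_smul_comm, map_zsmul, ← hN]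
  have hsubN : ∀ a b : Fin (n1 + n2), a ≠ b → subst a b N = 0 := by
    intro a b hab
    have h1 : rename (⇑(Equiv.swap a b)) N = -N := by
      rw [hNanti (Equiv.swap a b), Equiv.Perm.sign_swap hab]
      simp
    have h2 : subst (k := k) a b N = - subst a b N := by
      conv_lhs => rw [← subst_rename_swap a b hab N, h1, map_neg]
    have h3 : (2 : MvPolynomial (Fin (n1 + n2)) k) * subst a b N = 0 := by
      linear_combination h2
    rcases mul_eq_zero.mp h3 with h' | h'
    · exact absurd h' two_ne_zero
    · exact h'
  have hVdvdN : vand k (n1 + n2) ∣ N := by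
    have hv : vand k (n1 + n2) = ∏ q ∈ (Finset.univ.sigma fun i => Finset.Ioi i),
        ((X q.2 - X q.1 : MvPolynomial (Fin (n1 + n2)) k)) := by
      unfold vand
      exact Finset.prod_sigma' Finset.univ (fun i => Finset.Ioi i)
        (fun i j => (X j - X i : MvPolynomial (Fin (n1 + n2)) k))
    rw [hv]
    refine prod_dvd_of_primes _ _ ?_ ?_ N ?_
    · intro q hq
      have hlt : q.1 < q.2 := Finset.mem_Ioi.mp (Finset.mem_sigma.mp hq).2
      exact prime_X_sub_X (ne_of_gt hlt)
    · intro q hq q' hq' hdvd'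
      have hlt : q.1 < q.2 := Finset.mem_Ioi.mp (Finset.mem_sigma.mp hq).2
      have hlt' : q'.1 < q'.2 := Finset.mem_Ioi.mp (Finset.mem_sigma.mp hq').2
      by_contra hne
      refine not_X_sub_X_dvd hlt hlt' ?_ hdvd'
      intro hpq
      apply hne
      have h1 : q.1 = q'.1 := congrArg Prod.fst hpq
      have h2 : q.2 = q'.2 := congrArg Prod.snd hpq
      exact Sigma.ext h1 (by rw [h2])
    · intro q hq
      have hlt : q.1 < q.2 := Finset.mem_Ioi.mp (Finset.mem_sigma.mp hq).2
      exact dvd_of_subst_eq_zero (hsubN q.2 q.1 (ne_of_gt hlt))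
  obtain ⟨g, hg⟩ := hVdvdN
  have hιg : ι g = S := by
    have h1 : ι g * ι (vand k (n1 + n2)) = S * ι (vand k (n1 + n2)) := by
      rw [← hN, hg, map_mul, mul_comm]
    exact mul_right_cancel₀ hιVne h1
  refine ⟨g, ?_, hιg⟩
  intro w
  apply hιinj
  have h1 : ι (rename (⇑w) g) = fracMap (⇑w) w.injective (ι g) := by
    rw [hιdef, fracMap_algebraMap]
  rw [h1, hιg, hInv w]
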